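/- Let Ω be a locally compact Hausdorff space with no isolated points, and let X, Y be Banach spaces. Every C₀(Ω)-module map θ : C₀(Ω, X) → C₀(Ω, Y) (i.e., a ℂ-linear map with θ(f·φ) = θ(f)·φ for all f ∈ C₀(Ω,X), φ ∈ C₀(Ω)) is automatically bounded. -/

import Mathlib

open ZeroAtInfty Filter Topology

/-- Pointwise multiplication of a `C₀` scalar function and a `C₀` vector-valued
function, i.e. the canonical `C₀(Ω, ℂ)`-module action on `C₀(Ω, X)`. -/
noncomputable def c0smul {Ω X : Type*} [TopologicalSpace Ω]
    [NormedAddCommGroup X] [NormedSpace ℂ X]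
    (φ : C₀(Ω, ℂ)) (f : C₀(Ω, X)) : C₀(Ω, X) where
  toFun := fun ω => φ ω • f ω
  continuous_toFun := (φ.continuous).smul (f.continuous)
  zero_at_infty' := by
    have := (φ.zero_at_infty').smul (f.zero_at_infty')
    simpa using this

open Set
set_option linter.unusedSectionVars false
section helpers
variable {Ω : Type*} [TopologicalSpace Ω] [LocallyCompactSpace Ω] [T2Space Ω]
variable {X : Type*} [NormedAddCommGroup X] [NormedSpace ℂ X]

lemma c0smul_apply {φ : C₀(Ω, ℂ)} {f : C₀(Ω, X)} {x : Ω} :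
    c0smul φ f x = φ x • f x := rfl

lemma c0_apply_norm_le (h : C₀(Ω, X)) (x : Ω) : ‖h x‖ ≤ ‖h‖ := by
  rw [← ZeroAtInftyContinuousMap.norm_toBCF_eq_norm]
  exact h.toBCF.norm_coe_le_norm x

lemma c0_norm_le (h : C₀(Ω, X)) {c : ℝ} (hc : 0 ≤ c) (hb : ∀ x, ‖h x‖ ≤ c) : ‖h‖ ≤ c := by
  rw [← ZeroAtInftyContinuousMap.norm_toBCF_eq_norm]
  exact (BoundedContinuousFunction.norm_le hc).2 hb

lemma c0smul_norm_le {φ : C₀(Ω, ℂ)} (hφ : ∀ x, ‖φ x‖ ≤ 1) (f : C₀(Ω, X)) :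
    ‖c0smul φ f‖ ≤ ‖f‖ := by
  refine c0_norm_le _ (norm_nonneg f) fun x => ?_
  rw [c0smul_apply, norm_smul]
  calc ‖φ x‖ * ‖f x‖ ≤ 1 * ‖f‖ :=
        mul_le_mul (hφ x) (c0_apply_norm_le f x) (norm_nonneg _) zero_le_one
    _ = ‖f‖ := one_mul _

/-- Urysohn function as an element of `C₀(Ω, ℂ)`. -/
lemma urysohnC0 {L V : Set Ω} (hL : IsCompact L) (hV : IsOpen V) (hLV : L ⊆ V) :
    ∃ (φ : C₀(Ω, ℂ)) (M : Set Ω), IsCompact M ∧ M ⊆ V ∧ (∀ x ∈ L, φ x = 1) ∧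
      (∀ x ∉ M, φ x = 0) ∧ (∀ x, ‖φ x‖ ≤ 1) := by
  obtain ⟨k, hk, hkc, hLk, hkV⟩ := exists_compact_closed_between hL hV hLV
  obtain ⟨φ₀, h1, h0, hcs, hicc⟩ := exists_continuous_one_zero_of_isCompact hL
    isOpen_interior.isClosed_compl (disjoint_compl_right_iff_subset.mpr hLk)
  have h0' : ∀ x ∉ k, φ₀ x = 0 := fun x hx => h0 (fun h => hx (interior_subset h))
  refine ⟨⟨⟨fun x => (φ₀ x : ℂ), by continuity⟩, ?_⟩, k, hk, hkV, ?_, ?_, ?_⟩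
  · refine Filter.Tendsto.congr' ?_ tendsto_const_nhds
    filter_upwards [hk.compl_mem_cocompact] with x hx
    simp [h0' x hx]
  · intro x hx
    have := h1 hx
    simp only [Pi.one_apply] at this
    simp [ZeroAtInftyContinuousMap.coe_mk, ContinuousMap.coe_mk, this]
  · intro x hx
    simp [ZeroAtInftyContinuousMap.coe_mk, ContinuousMap.coe_mk, h0' x hx]
  · intro x
    simp only [ZeroAtInftyContinuousMap.coe_mk, ContinuousMap.coe_mk]
    rw [Complex.norm_real, Real.norm_eq_abs, abs_le]
    obtain ⟨a, b⟩ := hicc x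
    constructor <;> linarith

end helpers

section main
variable {Ω : Type*} [TopologicalSpace Ω] [LocallyCompactSpace Ω] [T2Space Ω]
variable {X Y : Type*} [NormedAddCommGroup X] [NormedSpace ℂ X] [CompleteSpace X]
variable [NormedAddCommGroup Y] [NormedSpace ℂ Y] [CompleteSpace Y]
variable (θ : C₀(Ω, X) →ₗ[ℂ] C₀(Ω, Y))
variable (hmod : ∀ (f : C₀(Ω, X)) (φ : C₀(Ω, ℂ)), θ (c0smul φ f) = c0smul φ (θ f))

include hmod in
/-- Localization: a pointwise norm violation at `ω' ∈ W` can be realized by a function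
compactly supported in `W`. -/
lemma localize (f : C₀(Ω, X)) (ω : Ω) {C : ℝ} (hC : 0 ≤ C) {W : Set Ω}
    (hW : IsOpen W) (hωW : ω ∈ W) (hval : C * ‖f‖ < ‖θ f ω‖) :
    ∃ (g : C₀(Ω, X)) (L : Set Ω), IsCompact L ∧ L ⊆ W ∧ (∀ x ∉ L, g x = 0) ∧
      C * ‖g‖ < ‖θ g‖ := by
  obtain ⟨K, hK, hωK, hKW⟩ := exists_compact_subset hW hωW
  obtain ⟨φ, M, hM, hMW, hφ1, hφ0, hφle⟩ := urysohnC0 hK hW hKW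
  set g := c0smul φ f with hg
  -- θ g ω = θ f ω
  obtain ⟨ψ, M', hM', hM'K, hψ1, hψ0, hψle⟩ :=
    urysohnC0 (isCompact_singleton (x := ω)) isOpen_interior
      (Set.singleton_subset_iff.mpr hωK)
  have hdiff : c0smul ψ (f - g) = 0 := by
    ext x
    by_cases hx : x ∈ interior K
    · have : φ x = 1 := hφ1 x (interior_subset hx)
      simp [c0smul_apply, hg, this]
    · have : ψ x = 0 := hψ0 x (fun h => hx (hM'K h))
      simp [c0smul_apply, this]
  have hθdiff : θ f ω = θ g ω := by
    have h0 : θ (c0smul ψ (f - g)) = 0 := by rw [hdiff, map_zero]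
    rw [hmod] at h0
    have := congrArg (fun h => h ω) h0
    simp only [c0smul_apply] at this
    rw [hψ1 ω rfl, one_smul] at this
    have hsub : θ (f - g) = θ f - θ g := map_sub θ f g
    rw [hsub] at this
    simpa [sub_eq_zero] using this
  refine ⟨g, M, hM, hMW, fun x hx => by simp [c0smul_apply, hg, hφ0 x hx], ?_⟩
  calc C * ‖g‖ ≤ C * ‖f‖ := by
        have := c0smul_norm_le hφle f
        exact mul_le_mul_of_nonneg_left this hC
    _ < ‖θ f ω‖ := hval
    _ = ‖θ g ω‖ := by rw [hθdiff]
    _ ≤ ‖θ g‖ := c0_apply_norm_le _ ω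

include hmod in
/-- Gliding hump: if arbitrarily bad functions can be found with compact support avoiding
any given compact set (and a fixed closed set `Z`), we get a contradiction. -/
lemma hump (Z : Set Ω) (hZ : IsClosed Z)
    (h : ∀ A : Set Ω, IsCompact A → Disjoint A Z → ∀ C : ℝ, 0 < C →
      ∃ (g : C₀(Ω, X)) (L : Set Ω), IsCompact L ∧ L ⊆ Aᶜ ∧ Disjoint L Z ∧
        (∀ x ∉ L, g x = 0) ∧ C * ‖g‖ < ‖θ g‖) : False := by
  classical
  have step : ∀ (n : ℕ) (s : {A : Set Ω // IsCompact A ∧ Disjoint A Z}),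
      ∃ (t : {A : Set Ω // IsCompact A ∧ Disjoint A Z}) (g : C₀(Ω, X)) (φ : C₀(Ω, ℂ)),
        s.1 ⊆ t.1 ∧ ‖g‖ ≤ ((1:ℝ)/2) ^ n ∧ (n : ℝ) < ‖θ g‖ ∧
        (∀ x, ‖φ x‖ ≤ 1) ∧ (∀ x, φ x • g x = g x) ∧
        (∀ x ∈ s.1, φ x = 0 ∧ g x = 0) ∧ (∀ x ∉ t.1, φ x = 0 ∧ g x = 0) := by
    rintro n ⟨A, hA, hAZ⟩
    have hCpos : (0:ℝ) < (n + 1) * 2 ^ n := by positivity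
    obtain ⟨g₀, L, hL, hLA, hLZ, hg₀0, hg₀⟩ := h A hA hAZ ((n + 1) * 2 ^ n) hCpos
    have hg₀ne : g₀ ≠ 0 := by
      rintro rfl
      simp only [norm_zero, mul_zero, map_zero] at hg₀
      exact lt_irrefl 0 hg₀
    have hg₀pos : 0 < ‖g₀‖ := norm_pos_iff.mpr hg₀ne
    set c : ℝ := (2 ^ n * ‖g₀‖)⁻¹ with hc
    have hcpos : 0 < c := by positivity
    set g : C₀(Ω, X) := (c : ℂ) • g₀ with hgdef
    have hgx : ∀ x, g x = (c : ℂ) • g₀ x := fun x => rfl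
    have hg0 : ∀ x ∉ L, g x = 0 := fun x hx => by rw [hgx, hg₀0 x hx, smul_zero]
    have hgnorm : ‖g‖ = ((1:ℝ)/2) ^ n := by
      rw [hgdef, norm_smul, Complex.norm_real, Real.norm_eq_abs, abs_of_pos hcpos, hc]
      rw [div_pow, one_pow]
      field_simp
    have hθg : (n : ℝ) < ‖θ g‖ := by
      rw [hgdef, map_smul, norm_smul, Complex.norm_real, Real.norm_eq_abs,
        abs_of_pos hcpos, hc]
      calc (n : ℝ) < n + 1 := by linarith
        _ = (2 ^ n * ‖g₀‖)⁻¹ * ((n + 1) * 2 ^ n * ‖g₀‖) := by field_simp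
        _ ≤ (2 ^ n * ‖g₀‖)⁻¹ * ‖θ g₀‖ := by
            apply mul_le_mul_of_nonneg_left _ (le_of_lt (by positivity))
            calc (n + 1) * 2 ^ n * ‖g₀‖ = ((n + 1) * 2 ^ n) * ‖g₀‖ := by ring
              _ ≤ ‖θ g₀‖ := le_of_lt hg₀
    have hVopen : IsOpen (A ∪ Z)ᶜ := (hA.isClosed.union hZ).isOpen_compl
    have hLV : L ⊆ (A ∪ Z)ᶜ := by
      intro x hx
      simp only [Set.mem_compl_iff, Set.mem_union, not_or]
      exact ⟨hLA hx, Set.disjoint_left.mp hLZ hx⟩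
    obtain ⟨φ, M, hM, hMV, hφ1, hφ0, hφle⟩ := urysohnC0 hL hVopen hLV
    have hLM : L ⊆ M := by
      intro x hx
      by_contra hxM
      have := hφ1 x hx
      rw [hφ0 x hxM] at this
      exact one_ne_zero this.symm
    have hMA : Disjoint M A := by
      rw [Set.disjoint_left]
      intro x hx hxA
      exact (hMV hx) (Set.mem_union_left _ hxA)
    have hMZ : Disjoint M Z := by
      rw [Set.disjoint_left]
      intro x hx hxZ
      exact (hMV hx) (Set.mem_union_right _ hxZ)
    refine ⟨⟨A ∪ M, hA.union hM, Set.disjoint_union_left.mpr ⟨hAZ, hMZ⟩⟩, g, φ,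
      Set.subset_union_left, le_of_eq hgnorm, hθg, hφle, ?_, ?_, ?_⟩
    · intro x
      by_cases hx : x ∈ L
      · rw [hφ1 x hx, one_smul]
      · rw [hg0 x hx, smul_zero]
    · intro x hx
      refine ⟨hφ0 x (fun hxM => Set.disjoint_left.mp hMA hxM hx), hg0 x (fun hxL => (hLA hxL) hx)⟩
    · intro x hx
      simp only [Set.mem_union, not_or] at hx
      exact ⟨hφ0 x hx.2, hg0 x (fun hxL => hx.2 (hLM hxL))⟩
  choose T G Φ hsub hgnorm hθg hφle hφg hold hnew using step
  set s₀ : {A : Set Ω // IsCompact A ∧ Disjoint A Z} :=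
    ⟨∅, isCompact_empty, Set.empty_disjoint Z⟩ with hs₀
  set A : ℕ → {A : Set Ω // IsCompact A ∧ Disjoint A Z} :=
    fun n => Nat.rec s₀ (fun k s => T k s) n with hA
  have hAsucc : ∀ n, A (n + 1) = T n (A n) := fun n => rfl
  set g : ℕ → C₀(Ω, X) := fun n => G n (A n) with hgdef
  set φ : ℕ → C₀(Ω, ℂ) := fun n => Φ n (A n) with hφdef
  have hmono : ∀ m n, m ≤ n → (A m).1 ⊆ (A n).1 := by
    intro m n hmn
    induction n, hmn using Nat.le_induction with
    | base => exact subset_rfl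
    | succ n hmn ih => exact ih.trans (by rw [hAsucc]; exact hsub n (A n))
  have hsum : Summable g := by
    apply Summable.of_norm_bounded summable_geometric_two
    intro n
    exact hgnorm n (A n)
  set f : C₀(Ω, X) := ∑' n, g n with hf
  set ev : Ω → C₀(Ω, X) →L[ℂ] X := fun x =>
    LinearMap.mkContinuous
      { toFun := fun h => h x
        map_add' := fun a b => rfl
        map_smul' := fun c a => rfl } 1
      (fun h => by simpa using c0_apply_norm_le h x) with hev
  have hevx : ∀ (x : Ω) (h : C₀(Ω, X)), ev x h = h x := fun x h => rfl
  have hfx : ∀ x, f x = ∑' n, g n x := by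
    intro x
    have := (ev x).map_tsum hsum
    simpa [hevx] using this
  have hsumx : ∀ x, Summable fun n => g n x := by
    intro x
    have := (hsum.map (ev x).toLinearMap (ev x).continuous)
    simpa [hevx, Function.comp_def] using this
  have key : ∀ n, c0smul (φ n) f = g n := by
    intro n
    ext x
    rw [c0smul_apply, hfx x, ← Summable.tsum_const_smul _ (hsumx x)]
    rw [tsum_eq_single n]
    · exact hφg n (A n) x
    · intro m hm
      rcases lt_or_gt_of_ne hm with hlt | hgt
      · -- m < n
        by_cases hx : x ∈ (A n).1
        · rw [(hold n (A n) x hx).1, zero_smul]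
        · have hx' : x ∉ (A (m + 1)).1 := fun h => hx (hmono (m + 1) n hlt h)
          rw [hAsucc] at hx'
          rw [(hnew m (A m) x hx').2, smul_zero]
      · -- n < m
        by_cases hx : x ∈ (A m).1
        · rw [(hold m (A m) x hx).2, smul_zero]
        · have hx' : x ∉ (A (n + 1)).1 := fun h => hx (hmono (n + 1) m hgt h)
          rw [hAsucc] at hx'
          rw [(hnew n (A n) x hx').1, zero_smul]
  have hbig : ∀ n : ℕ, (n : ℝ) < ‖θ f‖ := by
    intro n
    calc (n : ℝ) < ‖θ (g n)‖ := hθg n (A n)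
      _ = ‖c0smul (φ n) (θ f)‖ := by rw [← key n, hmod]
      _ ≤ ‖θ f‖ := c0smul_norm_le (hφle n (A n)) _
  obtain ⟨n, hn⟩ := exists_nat_gt ‖θ f‖
  exact absurd (hbig n) (not_lt.mpr (le_of_lt hn))

end main

theorem stmt_7
    {Ω : Type*} [TopologicalSpace Ω] [LocallyCompactSpace Ω] [T2Space Ω]
    (hni : ∀ ω : Ω, (𝓝[≠] ω).NeBot)
    {X Y : Type*} [NormedAddCommGroup X] [NormedSpace ℂ X] [CompleteSpace X]
    [NormedAddCommGroup Y] [NormedSpace ℂ Y] [CompleteSpace Y]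
    (θ : C₀(Ω, X) →ₗ[ℂ] C₀(Ω, Y))
    (hmod : ∀ (f : C₀(Ω, X)) (φ : C₀(Ω, ℂ)), θ (c0smul φ f) = c0smul φ (θ f)) :
    ∃ C : ℝ, ∀ f : C₀(Ω, X), ‖θ f‖ ≤ C * ‖f‖ := by
  by_contra hc
  push_neg at hc
  -- pointwise version of unboundedness
  have hpt : ∀ C : ℝ, 0 ≤ C → ∃ (f : C₀(Ω, X)) (ω : Ω), C * ‖f‖ < ‖θ f ω‖ := by
    intro C hC
    obtain ⟨f, hf⟩ := hc C
    by_contra hno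
    push_neg at hno
    have := c0_norm_le (θ f) (mul_nonneg hC (norm_nonneg f)) (fun x => hno f x)
    linarith
  -- dichotomy: violations escape to infinity, or cluster at a point
  by_cases hinf : ∀ A : Set Ω, IsCompact A → Disjoint A (∅ : Set Ω) → ∀ C : ℝ, 0 < C →
      ∃ (g : C₀(Ω, X)) (L : Set Ω), IsCompact L ∧ L ⊆ Aᶜ ∧ Disjoint L (∅ : Set Ω) ∧
        (∀ x ∉ L, g x = 0) ∧ C * ‖g‖ < ‖θ g‖
  · exact (hump θ hmod ∅ isClosed_empty hinf).elim
  push_neg at hinf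
  obtain ⟨A₀, hA₀, -, C₀, hC₀pos, hreg⟩ := hinf
  -- every big violation happens at a point of A₀
  have hin : ∀ C : ℝ, C₀ < C → ∃ (f : C₀(Ω, X)) (ω : Ω), ω ∈ A₀ ∧ C * ‖f‖ < ‖θ f ω‖ := by
    intro C hCC
    have hC : 0 ≤ C := le_of_lt (lt_trans hC₀pos hCC)
    obtain ⟨f, ω, hf⟩ := hpt C hC
    refine ⟨f, ω, ?_, hf⟩
    by_contra hωA
    obtain ⟨g, L, hL, hLW, hg0, hgineq⟩ :=
      localize θ hmod f ω hC hA₀.isClosed.isOpen_compl hωA hf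
    have hle := hreg g L hL hLW (Set.disjoint_empty L) hg0
    nlinarith [norm_nonneg g]
  -- cluster point of violations
  set S : ℕ → Set Ω := fun n =>
    closure {ω | ω ∈ A₀ ∧ ∃ f : C₀(Ω, X), (C₀ + n + 1) * ‖f‖ < ‖θ f ω‖} with hS
  have hSne : ∀ n, (S n).Nonempty := by
    intro n
    obtain ⟨f, ω, hωA, hf⟩ := hin (C₀ + n + 1) (by
      have : (0:ℝ) ≤ n := Nat.cast_nonneg n
      linarith)
    exact ⟨ω, subset_closure ⟨hωA, f, hf⟩⟩
  have hSsub : ∀ n, S n ⊆ A₀ := fun n =>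
    closure_minimal (fun ω h => h.1) hA₀.isClosed
  have hSdec : ∀ n, S (n + 1) ⊆ S n := by
    intro n
    apply closure_mono
    rintro ω ⟨hωA, f, hf⟩
    refine ⟨hωA, f, lt_of_le_of_lt ?_ hf⟩
    have : (C₀ + n + 1 : ℝ) ≤ C₀ + (n + 1 : ℕ) + 1 := by
      push_cast; linarith
    exact mul_le_mul_of_nonneg_right this (norm_nonneg f)
  have hScl : ∀ n, IsClosed (S n) := fun n => isClosed_closure
  obtain ⟨ωs, hωs⟩ := IsCompact.nonempty_iInter_of_sequence_nonempty_isCompact_isClosed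
    S hSdec hSne (hA₀.of_isClosed_subset (hScl 0) (hSsub 0)) hScl
  -- now run the hump at ωs with Z = {ωs}
  apply hump θ hmod {ωs} isClosed_singleton
  intro A hA hAZ C hC
  obtain ⟨n, hn⟩ := exists_nat_gt C
  have hCn : C ≤ C₀ + n + 1 := by linarith
  have hWopen : IsOpen Aᶜ := hA.isClosed.isOpen_compl
  have hωsW : ωs ∈ Aᶜ := fun h => Set.disjoint_left.mp hAZ h rfl
  have hωsS : ωs ∈ S n := Set.mem_iInter.mp hωs n
  obtain ⟨ω, hωmem⟩ := (_root_.mem_closure_iff.mp hωsS) Aᶜ hWopen hωsW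
  have hωW : ω ∈ Aᶜ := hωmem.1
  obtain ⟨hωA₀, f, hf⟩ := hωmem.2
  have hfω : C * ‖f‖ < ‖θ f ω‖ :=
    lt_of_le_of_lt (mul_le_mul_of_nonneg_right hCn (norm_nonneg f)) hf
  set V : Set Ω := {x | C * ‖f‖ < ‖θ f x‖} with hV
  have hVopen : IsOpen V := isOpen_lt continuous_const ((θ f).continuous.norm)
  obtain ⟨ω'', hω''V, hω''W, hω''ne⟩ : ∃ x, x ∈ V ∧ x ∈ Aᶜ ∧ x ≠ ωs := by
    by_cases hcase : ω = ωs
    · subst hcase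
      have hmem : V ∩ Aᶜ ∈ 𝓝 ω := ((hVopen.inter hWopen).mem_nhds ⟨hfω, hωW⟩)
      have hne : ((V ∩ Aᶜ) ∩ {ω}ᶜ).Nonempty := by
        haveI := hni ω
        exact Filter.nonempty_of_mem
          (Filter.inter_mem (mem_nhdsWithin_of_mem_nhds hmem) self_mem_nhdsWithin)
      obtain ⟨x, ⟨hx1, hx2⟩, hx3⟩ := hne
      exact ⟨x, hx1, hx2, hx3⟩
    · exact ⟨ω, hfω, hωW, hcase⟩
  have hW'open : IsOpen (Aᶜ ∩ {ωs}ᶜ) := hWopen.inter isClosed_singleton.isOpen_compl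
  have hω''W' : ω'' ∈ Aᶜ ∩ {ωs}ᶜ := ⟨hω''W, by simpa using hω''ne⟩
  obtain ⟨g, L, hL, hLW', hg0, hgineq⟩ :=
    localize θ hmod f ω'' (le_of_lt hC) hW'open hω''W' hω''V
  refine ⟨g, L, hL, fun x hx => (hLW' hx).1, ?_, hg0, hgineq⟩
  rw [Set.disjoint_left]
  intro x hx
  exact (hLW' hx).2
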